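/- Let ρ ∈ (0,1), k ≥ 1, ν_0 ∈ ℝ and ν ∈ ℝ^k, and let G(ν_0, ν) = (1/√ρ) ∫_{−∞}^{∞} φ((t − ν_0)/√ρ) ∏_{j=1}^{k} Φ((t − ν_j)/√(1−ρ)) dt. For i ∈ {1,…,k} define H_i(t, ν) = (Φ((t−ν_i)/√(1−ρ))/φ((t−ν_i)/√(1−ρ))) · (d/dt ∏_{j=1}^{k} Φ((t−ν_j)/√(1−ρ))) / (∏_{j=1}^{k} Φ((t−ν_j)/√(1−ρ))). Then (∂²G/∂ν_0∂ν_i)·(∂G/∂ν_0) − (∂²G/∂ν_0²)·(∂G/∂ν_i), evaluated at (ν_0, ν), equals (1/(2ρ²√(1−ρ))) ∫_{−∞}^{∞}∫_{−∞}^{∞} φ((s−ν_0)/√ρ) φ((t−ν_0)/√ρ) φ((s−ν_i)/√(1−ρ)) φ((t−ν_i)/√(1−ρ)) ∏_{j≠i} Φ((s−ν_j)/√(1−ρ)) ∏_{j≠i} Φ((t−ν_j)/√(1−ρ)) · (s−t)(H_i(s, ν) − H_i(t, ν)) ds dt. -/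

import Mathlib

open MeasureTheory ProbabilityTheory Filter
open scoped ENNReal

/-- The standard normal cumulative distribution function `Φ`. -/
noncomputable def Phi (x : ℝ) : ℝ := ((gaussianReal 0 1) (Set.Iic x)).toReal

/-- The standard normal probability density function `φ`. -/
noncomputable def phiPDF (x : ℝ) : ℝ := gaussianPDFReal 0 1 x

/-- The joint law of `n` independent standard normal random variables. -/
noncomputable def stdGaussianPi (n : ℕ) : Measure (Fin n → ℝ) :=
  Measure.pi fun _ => gaussianReal 0 1

/-- The intraclass-correlation multivariate Gaussian vector `X ~ N(μ, Σ)` with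
`Σ_{ij} = ρ + (1-ρ)δ_{ij}`, realized as `X_i = μ_i + √ρ Y_0 + √(1-ρ) Y_i` where
`Y_0, …, Y_k` are independent standard normals (the coordinates of `ω`). -/
noncomputable def Xvec (ρ : ℝ) {k : ℕ} (μ : Fin k → ℝ) (i : Fin k) (ω : Fin (k+1) → ℝ) : ℝ :=
  μ i + Real.sqrt ρ * ω 0 + Real.sqrt (1-ρ) * ω i.succ

/-- The cumulative distribution function of `X* = max {X_1, …, X_k}`. -/
noncomputable def Fstar (ρ : ℝ) {k : ℕ} (μ : Fin k → ℝ) (x : ℝ) : ℝ :=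
  (stdGaussianPi (k+1) {ω | (⨆ i, Xvec ρ μ i ω) ≤ x}).toReal

/-- `G(ν₀, ν) = (1/√ρ) ∫ φ((t-ν₀)/√ρ) ∏_j Φ((t-ν_j)/√(1-ρ)) dt`. -/
noncomputable def Gint (ρ : ℝ) {k : ℕ} (ν0 : ℝ) (ν : Fin k → ℝ) : ℝ :=
  (1 / Real.sqrt ρ) *
    ∫ t : ℝ, phiPDF ((t - ν0) / Real.sqrt ρ) * ∏ j, Phi ((t - ν j) / Real.sqrt (1-ρ))

/-- The partial derivative `∂G/∂ν₀(ν₀, ν)`. -/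
noncomputable def dG0 (ρ : ℝ) {k : ℕ} (ν : Fin k → ℝ) (ν0 : ℝ) : ℝ :=
  deriv (fun v => Gint ρ v ν) ν0

/-- The partial derivative `∂G/∂ν_i(ν₀, ν)`. -/
noncomputable def dGi (ρ : ℝ) {k : ℕ} (i : Fin k) (ν : Fin k → ℝ) (ν0 : ℝ) : ℝ :=
  deriv (fun v => Gint ρ ν0 (Function.update ν i v)) (ν i)

/-- `Δ_i = ∂²G/∂ν₀∂ν_i · ∂G/∂ν₀ - ∂²G/∂ν₀² · ∂G/∂ν_i` evaluated at `(ν₀, ν)`. -/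
noncomputable def Delta (ρ : ℝ) {k : ℕ} (i : Fin k) (ν : Fin k → ℝ) (ν0 : ℝ) : ℝ :=
  deriv (fun v0 => dGi ρ i ν v0) ν0 * dG0 ρ ν ν0 -
    deriv (fun v0 => dG0 ρ ν v0) ν0 * dGi ρ i ν ν0

/-- `H_i(t, ν)`. -/
noncomputable def Hfun (ρ : ℝ) {k : ℕ} (i : Fin k) (ν : Fin k → ℝ) (t : ℝ) : ℝ :=
  (Phi ((t - ν i) / Real.sqrt (1-ρ)) / phiPDF ((t - ν i) / Real.sqrt (1-ρ))) *
    deriv (fun s => ∏ j, Phi ((s - ν j) / Real.sqrt (1-ρ))) t /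
    ∏ j, Phi ((t - ν j) / Real.sqrt (1-ρ))

/-! ### Auxiliary facts about `phiPDF` and `Phi` -/

section Aux
open Real Metric

lemma phiPDF_eq (x : ℝ) : phiPDF x = (Real.sqrt (2*Real.pi))⁻¹ * Real.exp (-(x^2/2)) := by
  simp only [phiPDF, gaussianPDFReal, NNReal.coe_one, mul_one, sub_zero, neg_div]

lemma phiPDF_pos (x : ℝ) : 0 < phiPDF x := gaussianPDFReal_pos 0 1 x one_ne_zero

lemma phiPDF_le (x : ℝ) : phiPDF x ≤ (Real.sqrt (2*Real.pi))⁻¹ := by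
  rw [phiPDF_eq]
  have h1 : Real.exp (-(x^2/2)) ≤ 1 := Real.exp_le_one_iff.2 (by nlinarith [sq_nonneg x])
  have h2 : (0:ℝ) < (Real.sqrt (2*Real.pi))⁻¹ := inv_pos.2 (Real.sqrt_pos.2 Real.two_pi_pos)
  nlinarith

lemma continuous_phiPDF : Continuous phiPDF := by
  simp only [funext phiPDF_eq]
  continuity

lemma hasDerivAt_phiPDF (x : ℝ) : HasDerivAt phiPDF (-x * phiPDF x) x := by
  have h : HasDerivAt (fun x : ℝ => (Real.sqrt (2*Real.pi))⁻¹ * Real.exp (-(x^2/2))) ((Real.sqrt (2*Real.pi))⁻¹ * (Real.exp (-(x^2/2)) * -x)) x := by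
    have h1 : HasDerivAt (fun x : ℝ => -(x^2/2)) (-x) x := by
      have := ((hasDerivAt_pow 2 x).div_const 2).neg
      simpa [Pi.neg_def] using this
    exact (h1.exp).const_mul _
  have h2 : HasDerivAt phiPDF ((Real.sqrt (2*Real.pi))⁻¹ * (Real.exp (-(x^2/2)) * -x)) x := by
    refine HasDerivAt.congr_of_eventuallyEq h ?_
    filter_upwards with y using (phiPDF_eq y)
  convert h2 using 1
  rw [phiPDF_eq]; ring

lemma integrable_phiPDF : Integrable phiPDF := integrable_gaussianPDFReal 0 1

lemma Phi_eq (x : ℝ) : Phi x = ∫ t in Set.Iic x, phiPDF t := by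
  have : (gaussianReal 0 1) (Set.Iic x) = ENNReal.ofReal (∫ t in Set.Iic x, phiPDF t) :=
    gaussianReal_apply_eq_integral 0 one_ne_zero _
  rw [Phi, this,
    ENNReal.toReal_ofReal (setIntegral_nonneg measurableSet_Iic fun t _ => (phiPDF_pos t).le)]

lemma Phi_pos (x : ℝ) : 0 < Phi x := by
  rw [Phi_eq]
  refine (setIntegral_pos_iff_support_of_nonneg_ae ?_ integrable_phiPDF.integrableOn).2 ?_
  · exact ae_of_all _ fun t => (phiPDF_pos t).le
  · have : Function.support phiPDF = Set.univ := by
      ext t; simp [Function.support, (phiPDF_pos t).ne']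
    rw [this, Set.univ_inter]
    simp [Real.volume_Iic]

lemma Phi_le_one (x : ℝ) : Phi x ≤ 1 := by
  rw [Phi]
  exact ENNReal.toReal_le_of_le_ofReal zero_le_one (by simpa using prob_le_one)

lemma hasDerivAt_Phi (x : ℝ) : HasDerivAt Phi (phiPDF x) x := by
  have key : ∀ y : ℝ, Phi y = Phi 0 + ∫ t in (0:ℝ)..y, phiPDF t := by
    intro y
    rw [Phi_eq, Phi_eq, ← intervalIntegral.integral_Iic_sub_Iic integrable_phiPDF.integrableOn
      integrable_phiPDF.integrableOn]
    ring
  have h : HasDerivAt (fun u => ∫ t in (0:ℝ)..u, phiPDF t) (phiPDF x) x :=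
    intervalIntegral.integral_hasDerivAt_right integrable_phiPDF.intervalIntegrable
      (continuous_phiPDF.stronglyMeasurable.stronglyMeasurableAtFilter)
      continuous_phiPDF.continuousAt
  have := (h.const_add (Phi 0))
  exact this.congr_of_eventuallyEq (by filter_upwards with y using key y)

lemma continuous_Phi : Continuous Phi :=
  continuous_iff_continuousAt.2 fun x => (hasDerivAt_Phi x).continuousAt

/-! ### Integrability lemmas -/

lemma integrable_gauss_poly {c : ℝ} (hc : 0 < c) (x0 : ℝ) :
    Integrable (fun t : ℝ => (|t - x0| + 1) * Real.exp (-c*(t-x0)^2)) := by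
  have h0 : Integrable (fun t : ℝ => Real.exp (-(c/2) * (t-x0)^2)) :=
    (integrable_exp_neg_mul_sq (half_pos hc)).comp_sub_right x0
  have hint : Integrable (fun t : ℝ => (2 + 2/c) * Real.exp (-(c/2)*(t-x0)^2)) :=
    h0.const_mul _
  refine hint.mono' ?_ ?_
  · exact (((continuous_abs.comp (by continuity)).add continuous_const).mul
      (by continuity)).aestronglyMeasurable
  · filter_upwards with t
    set y := t - x0
    have h1 : Real.exp (c/2*y^2) ≥ 1 := Real.one_le_exp (by positivity)
    have h2 : c/2*y^2 ≤ Real.exp (c/2*y^2) := (Real.add_one_le_exp _).trans' (by linarith)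
    have h3 : |y| ≤ 1 + y^2 := by nlinarith [abs_nonneg y, sq_abs y, sq_nonneg (|y|-1)]
    rw [Real.norm_eq_abs, abs_of_nonneg (by positivity)]
    have h6 : |y| + 1 ≤ (2 + 2/c) * Real.exp (c/2*y^2) := by
      have h7 : y^2 ≤ 2/c * Real.exp (c/2*y^2) := by
        calc y^2 = 2/c * (c/2*y^2) := by field_simp
        _ ≤ 2/c * Real.exp (c/2*y^2) := mul_le_mul_of_nonneg_left h2 (by positivity)
      calc |y| + 1 ≤ (1 + y^2) + 1 := by linarith
        _ ≤ 2*Real.exp (c/2*y^2) + (2/c)*Real.exp (c/2*y^2) := by linarith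
        _ = (2 + 2/c) * Real.exp (c/2*y^2) := by ring
    calc (|y|+1) * Real.exp (-c*y^2)
        ≤ ((2+2/c) * Real.exp (c/2*y^2)) * Real.exp (-c*y^2) :=
          mul_le_mul_of_nonneg_right h6 (Real.exp_pos _).le
      _ = (2+2/c) * Real.exp (-(c/2)*y^2) := by
          rw [mul_assoc, ← Real.exp_add]; ring_nf

/-- master integrability lemma -/
lemma integ_shape {a : ℝ} (ha : 0 < a) (v d e K : ℝ) {g : ℝ → ℝ} (hg : Continuous g)
    (hgK : ∀ t, |g t| ≤ K) :
    Integrable (fun t : ℝ => (d + e*t) * phiPDF ((t - v)/a) * g t) := by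
  have hc : (0:ℝ) < 1/(2*a^2) := by positivity
  set C := (|d| + |e| + |e| * |v|) * ((Real.sqrt (2*Real.pi))⁻¹ * K) with hC
  refine (((integrable_gauss_poly hc v).const_mul C).mono' ?_ ?_)
  · exact (((continuous_const.add (continuous_const.mul continuous_id)).mul
      (continuous_phiPDF.comp (by continuity))).mul hg).aestronglyMeasurable
  · filter_upwards with t
    have hK : 0 ≤ K := le_trans (abs_nonneg _) (hgK 0)
    have hφ : phiPDF ((t-v)/a) = (Real.sqrt (2*Real.pi))⁻¹ * Real.exp (-(1/(2*a^2))*(t-v)^2) := by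
      rw [phiPDF_eq]
      have hexp : -(((t-v)/a)^2/2) = -(1/(2*a^2))*(t-v)^2 := by
        rw [div_pow, div_div, neg_mul, neg_inj, one_div, inv_mul_eq_div, mul_comm 2 (a^2)]
      rw [hexp]
    rw [Real.norm_eq_abs, abs_mul, abs_mul, abs_of_pos (phiPDF_pos _), hφ]
    have h1 : |d + e*t| ≤ (|d| + |e| + |e| * |v|) * (|t - v| + 1) := by
      have ha1 : |d + e*t| ≤ |d| + |e| * |t| := by
        calc |d + e*t| ≤ |d| + |e*t| := abs_add_le _ _
        _ = |d| + |e| * |t| := by rw [abs_mul]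
      have h2 : |t| ≤ |t - v| + |v| := by
        calc |t| = |(t-v) + v| := by ring_nf
        _ ≤ |t-v| + |v| := abs_add_le _ _
      nlinarith [abs_nonneg (t-v), abs_nonneg d, abs_nonneg e, abs_nonneg v, abs_nonneg t,
        mul_le_mul_of_nonneg_left h2 (abs_nonneg e),
        mul_nonneg (abs_nonneg d) (abs_nonneg (t-v)),
        mul_nonneg (mul_nonneg (abs_nonneg e) (abs_nonneg v)) (abs_nonneg (t-v))]
    have hsq : (0:ℝ) < (Real.sqrt (2*Real.pi))⁻¹ := inv_pos.2 (Real.sqrt_pos.2 Real.two_pi_pos)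
    have hexp : (0:ℝ) < Real.exp (-(1/(2*a^2))*(t-v)^2) := Real.exp_pos _
    calc |d + e*t| * ((Real.sqrt (2*Real.pi))⁻¹ * Real.exp (-(1/(2*a^2))*(t-v)^2)) * |g t|
        ≤ ((|d| + |e| + |e| * |v|) * (|t - v| + 1)) * ((Real.sqrt (2*Real.pi))⁻¹ * Real.exp (-(1/(2*a^2))*(t-v)^2)) * K := by
          apply mul_le_mul (mul_le_mul_of_nonneg_right h1 (by positivity)) (hgK t) (abs_nonneg _)
          positivity
      _ = C * ((|t - v| + 1) * Real.exp (-(1/(2*a^2))*(t-v)^2)) := by rw [hC]; ring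

lemma integ_shape' {a : ℝ} (ha : 0 < a) (v K : ℝ) {g : ℝ → ℝ} (hg : Continuous g)
    (hgK : ∀ t, |g t| ≤ K) : Integrable (fun t : ℝ => phiPDF ((t - v)/a) * g t) := by
  have := integ_shape ha v 1 0 K hg hgK
  simpa using this

lemma integ_shape'' {a : ℝ} (ha : 0 < a) (v K : ℝ) {g : ℝ → ℝ} (hg : Continuous g)
    (hgK : ∀ t, |g t| ≤ K) : Integrable (fun t : ℝ => t * (phiPDF ((t - v)/a) * g t)) := by
  have := integ_shape ha v 0 1 K hg hgK
  simpa [mul_assoc] using this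

/-! ### Differentiation under the integral sign -/

/-- pointwise: derivative of `v ↦ φ((t-v)/a)`. -/
lemma hasDerivAt_phi_param {a : ℝ} (ha : 0 < a) (t v : ℝ) :
    HasDerivAt (fun v => phiPDF ((t - v)/a)) ((t - v)/a^2 * phiPDF ((t - v)/a)) v := by
  have h1 : HasDerivAt (fun v : ℝ => (t - v)/a) (-1/a) v := by
    simpa using ((hasDerivAt_id v).const_sub t).div_const a
  have h2 := (hasDerivAt_phiPDF ((t - v)/a)).comp v h1
  rw [show (t - v)/a^2 * phiPDF ((t - v)/a) = -((t - v)/a) * phiPDF ((t - v)/a) * (-1/a) by ring]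
  exact h2

/-- bound on `φ((t-v)/a)` for `v` in a unit ball around `v0`. -/
lemma phi_param_bound {a : ℝ} (ha : 0 < a) {t v v0 : ℝ} (hv : |v - v0| ≤ 1) :
    phiPDF ((t - v)/a) ≤ (Real.sqrt (2*Real.pi))⁻¹ * Real.exp (1/(2*a^2)) *
      Real.exp (-(1/(4*a^2))*(t-v0)^2) := by
  rw [phiPDF_eq]
  have key : -(((t - v)/a)^2/2) ≤ 1/(2*a^2) + (-(1/(4*a^2))*(t-v0)^2) := by
    have h2 : (t - v0)^2 ≤ 2*(t-v)^2 + 2*(v-v0)^2 := by nlinarith [sq_nonneg ((t-v)-(v-v0))]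
    have h3 : (v - v0)^2 ≤ 1 := by nlinarith [abs_nonneg (v-v0), sq_abs (v-v0)]
    have h4 : ((t - v)/a)^2 = (t-v)^2/a^2 := by rw [div_pow]
    have ha2 : (0:ℝ) < a^2 := by positivity
    have h5 : (-(t-v)^2*2) ≤ 2 - (t-v0)^2 := by linarith
    calc -(((t - v)/a)^2/2) = (-(t-v)^2*2)/(4*a^2) := by rw [h4]; ring
      _ ≤ (2 - (t-v0)^2)/(4*a^2) := by gcongr
      _ = 1/(2*a^2) + (-(1/(4*a^2))*(t-v0)^2) := by ring
  calc (Real.sqrt (2*Real.pi))⁻¹ * Real.exp (-(((t - v)/a)^2/2))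
      ≤ (Real.sqrt (2*Real.pi))⁻¹ * Real.exp (1/(2*a^2) + (-(1/(4*a^2))*(t-v0)^2)) := by
        apply mul_le_mul_of_nonneg_left (Real.exp_le_exp.2 key)
        positivity
    _ = _ := by rw [Real.exp_add]; ring

/-- Differentiation under the integral sign for `v ↦ ∫ φ((t-v)/a) g t dt`. -/
lemma keyderiv {a : ℝ} (ha : 0 < a) {g : ℝ → ℝ} {K : ℝ} (hg : Continuous g)
    (hgK : ∀ t, |g t| ≤ K) (v0 : ℝ) :
    HasDerivAt (fun v => ∫ t : ℝ, phiPDF ((t - v)/a) * g t)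
      (∫ t : ℝ, (t - v0)/a^2 * phiPDF ((t - v0)/a) * g t) v0 := by
  have hK : 0 ≤ K := le_trans (abs_nonneg _) (hgK 0)
  set C := ((Real.sqrt (2*Real.pi))⁻¹ * Real.exp (1/(2*a^2)) / a^2) * K with hCdef
  have hres := hasDerivAt_integral_of_dominated_loc_of_deriv_le
    (F := fun v t => phiPDF ((t - v)/a) * g t)
    (F' := fun v t => (t - v)/a^2 * phiPDF ((t - v)/a) * g t)
    (x₀ := v0) (s := Metric.ball v0 1)
    (bound := fun t => C * ((|t - v0| + 1) * Real.exp (-(1/(4*a^2))*(t-v0)^2)))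
    (Metric.ball_mem_nhds _ one_pos)
    (by
      filter_upwards with v
      exact ((continuous_phiPDF.comp (by continuity)).mul hg).aestronglyMeasurable)
    (integ_shape' ha v0 K hg hgK)
    (by
      exact (((continuous_id.sub continuous_const).div_const _).mul
        (continuous_phiPDF.comp (by continuity))).mul hg |>.aestronglyMeasurable)
    (by
      filter_upwards with t v hv
      have hv1 : |v - v0| ≤ 1 := le_of_lt (by simpa [Real.dist_eq] using hv)
      have hb := phi_param_bound ha (t := t) hv1
      have htv : |t - v| ≤ |t - v0| + 1 := by
        have h8 := abs_sub_le t v0 v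
        have h9 : |v0 - v| ≤ 1 := by rw [abs_sub_comm]; exact hv1
        linarith
      rw [Real.norm_eq_abs, abs_mul, abs_mul, abs_div, abs_of_pos (phiPDF_pos _)]
      have ha2 : (0:ℝ) < a^2 := by positivity
      rw [abs_of_pos (by positivity : (0:ℝ) < a^2)]
      calc |t - v|/a^2 * phiPDF ((t - v)/a) * |g t|
          ≤ (|t - v0| + 1)/a^2 * ((Real.sqrt (2*Real.pi))⁻¹ * Real.exp (1/(2*a^2)) *
              Real.exp (-(1/(4*a^2))*(t-v0)^2)) * K := by
            gcongr <;> first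
              | exact (phiPDF_pos _).le
              | exact htv
              | exact hb
              | exact hgK t
        _ = C * ((|t - v0| + 1) * Real.exp (-(1/(4*a^2))*(t-v0)^2)) := by rw [hCdef]; ring)
    ((integrable_gauss_poly (by positivity) v0).const_mul C)
    (by
      filter_upwards with t v hv
      exact (hasDerivAt_phi_param ha t v).mul_const (g t))
  exact hres.2

end Aux

/-! ### The product `P` and its derivative -/

section prodP
open Real Metric
variable {k : ℕ} (b : ℝ) (ν : Fin k → ℝ)

/-- `P t = ∏ Φ((t-ν_j)/b)`. -/
noncomputable def Pfn (t : ℝ) : ℝ := ∏ j, Phi ((t - ν j)/b)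

/-- derivative of `P`. -/
noncomputable def Pd (t : ℝ) : ℝ :=
  ∑ j, (∏ l ∈ Finset.univ.erase j, Phi ((t - ν l)/b)) * ((1/b) * phiPDF ((t - ν j)/b))

lemma hasDerivAt_Phi_aff (hb : 0 < b) (c t : ℝ) :
    HasDerivAt (fun t => Phi ((t - c)/b)) ((1/b) * phiPDF ((t - c)/b)) t := by
  have h1 : HasDerivAt (fun t : ℝ => (t - c)/b) (1/b) t := by
    simpa using ((hasDerivAt_id t).sub_const c).div_const b
  have := (hasDerivAt_Phi ((t - c)/b)).comp t h1
  rw [mul_comm]; exact this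

lemma hasDerivAt_Pfn (hb : 0 < b) (t : ℝ) : HasDerivAt (Pfn b ν) (Pd b ν t) t := by
  have h := HasDerivAt.fun_finsetProd (u := Finset.univ)
    (f := fun j t => Phi ((t - ν j)/b)) (f' := fun j => (1/b) * phiPDF ((t - ν j)/b))
    (fun j _ => hasDerivAt_Phi_aff b hb (ν j) t)
  exact h

lemma continuous_Pd (hb : 0 < b) : Continuous (Pd b ν) := by
  apply continuous_finset_sum
  intro j _
  exact (continuous_finset_prod _ fun l _ =>
    continuous_Phi.comp (by continuity)).mul (continuous_const.mul
    (continuous_phiPDF.comp (by continuity)))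

lemma continuous_Pfn : Continuous (Pfn b ν) :=
  continuous_finset_prod _ fun l _ =>
    continuous_Phi.comp ((continuous_id.sub continuous_const).div_const b)

lemma Pfn_pos (t : ℝ) : 0 < Pfn b ν t := Finset.prod_pos fun j _ => Phi_pos _

lemma Pfn_le_one (t : ℝ) : Pfn b ν t ≤ 1 :=
  Finset.prod_le_one (fun j _ => (Phi_pos _).le) fun j _ => Phi_le_one _

lemma prod_erase_nonneg (i : Fin k) (t : ℝ) :
    0 ≤ ∏ l ∈ Finset.univ.erase i, Phi ((t - ν l)/b) :=
  Finset.prod_nonneg fun l _ => (Phi_pos _).le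

lemma prod_erase_le_one (i : Fin k) (t : ℝ) :
    ∏ l ∈ Finset.univ.erase i, Phi ((t - ν l)/b) ≤ 1 :=
  Finset.prod_le_one (fun l _ => (Phi_pos _).le) fun l _ => Phi_le_one _

lemma Pd_bound (hb : 0 < b) (t : ℝ) : |Pd b ν t| ≤ k * ((1/b) * (Real.sqrt (2*Real.pi))⁻¹) := by
  have hsq : (0:ℝ) < (Real.sqrt (2*Real.pi))⁻¹ := inv_pos.2 (Real.sqrt_pos.2 Real.two_pi_pos)
  calc |Pd b ν t| ≤ ∑ j : Fin k, |(∏ l ∈ Finset.univ.erase j, Phi ((t - ν l)/b)) *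
        ((1/b) * phiPDF ((t - ν j)/b))| := Finset.abs_sum_le_sum_abs _ _
    _ ≤ ∑ _j : Fin k, (1/b) * (Real.sqrt (2*Real.pi))⁻¹ := by
        apply Finset.sum_le_sum
        intro j _
        rw [abs_mul, abs_of_nonneg (prod_erase_nonneg b ν j t),
          abs_of_nonneg (mul_nonneg (by positivity) (phiPDF_pos _).le)]
        calc (∏ l ∈ Finset.univ.erase j, Phi ((t - ν l)/b)) * ((1/b) * phiPDF ((t - ν j)/b))
            ≤ 1 * ((1/b) * (Real.sqrt (2*Real.pi))⁻¹) := by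
              apply mul_le_mul (prod_erase_le_one b ν j t) _
                (mul_nonneg (by positivity) (phiPDF_pos _).le) zero_le_one
              exact mul_le_mul_of_nonneg_left (phiPDF_le _) (by positivity)
          _ = (1/b) * (Real.sqrt (2*Real.pi))⁻¹ := one_mul _
    _ = k * ((1/b) * (Real.sqrt (2*Real.pi))⁻¹) := by
        rw [Finset.sum_const, Finset.card_univ, Fintype.card_fin, nsmul_eq_mul]

/-- rewriting the product over an updated vector -/
lemma prod_update (i : Fin k) (v t : ℝ) :
    ∏ j, Phi ((t - Function.update ν i v j)/b) =
      Phi ((t - v)/b) * ∏ j ∈ Finset.univ.erase i, Phi ((t - ν j)/b) := by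
  rw [← Finset.mul_prod_erase Finset.univ _ (Finset.mem_univ i)]
  congr 1
  · rw [Function.update_self]
  · apply Finset.prod_congr rfl
    intro j hj
    rw [Function.update_of_ne (Finset.ne_of_mem_erase hj)]

end prodP

/-! ### `Q` -/
section Qsec
open Real
variable {k : ℕ} (b : ℝ) (ν : Fin k → ℝ) (i : Fin k)

/-- `Q t = ∏_{j ≠ i} Φ((t-ν_j)/b)`. -/
noncomputable def Qfn (t : ℝ) : ℝ := ∏ j ∈ Finset.univ.erase i, Phi ((t - ν j)/b)

lemma continuous_Qfn : Continuous (Qfn b ν i) :=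
  continuous_finset_prod _ fun l _ => continuous_Phi.comp (by continuity)

lemma Qfn_pos (t : ℝ) : 0 < Qfn b ν i t := Finset.prod_pos fun j _ => Phi_pos _

lemma Qfn_le_one (t : ℝ) : Qfn b ν i t ≤ 1 := prod_erase_le_one b ν i t

lemma Pfn_eq_mul (t : ℝ) : Pfn b ν t = Phi ((t - ν i)/b) * Qfn b ν i t :=
  (Finset.mul_prod_erase Finset.univ _ (Finset.mem_univ i)).symm

end Qsec

/-! ### Derivative formulas -/
section Main
open Real Metric

/-- translation identity -/
lemma shift_int (a v : ℝ) (g : ℝ → ℝ) :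
    ∫ u : ℝ, phiPDF (u/a) * g (u + v) = ∫ t : ℝ, phiPDF ((t - v)/a) * g t := by
  have := integral_add_right_eq_self (μ := (volume : Measure ℝ))
    (fun t => phiPDF ((t - v)/a) * g t) v
  simpa using this

variable {k : ℕ} {ρ : ℝ}

lemma hDlem {k : ℕ} (a b : ℝ) (ha : 0 < a) (hb : 0 < b) (ν : Fin k → ℝ) (v : ℝ)
    (K : ℝ) (hKdef : K = k * ((1/b) * (Real.sqrt (2*Real.pi))⁻¹)) (hK : 0 ≤ K) :
    HasDerivAt (fun w => ∫ u : ℝ, phiPDF (u/a) * Pfn b ν (u + w))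
      (∫ u : ℝ, phiPDF (u/a) * Pd b ν (u + v)) v := by
  have hres := hasDerivAt_integral_of_dominated_loc_of_deriv_le
    (F := fun w u => phiPDF (u/a) * Pfn b ν (u + w))
    (F' := fun w u => phiPDF (u/a) * Pd b ν (u + w))
    (x₀ := v) (s := Metric.ball v 1) (μ := (volume : Measure ℝ))
    (bound := fun u => phiPDF (u/a) * K)
    (Metric.ball_mem_nhds _ one_pos)
    (by
      filter_upwards with w
      exact ((continuous_phiPDF.comp (continuous_id.div_const a)).mul
        ((continuous_Pfn b ν).comp (continuous_id.add continuous_const))).aestronglyMeasurable)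
    (by
      have := integ_shape' ha 0 1 (g := fun u => Pfn b ν (u + v))
        ((continuous_Pfn b ν).comp (continuous_id.add continuous_const))
        (fun t => by rw [abs_of_pos (Pfn_pos b ν _)]; exact Pfn_le_one b ν _)
      simpa using this)
    (by
      exact ((continuous_phiPDF.comp (continuous_id.div_const a)).mul
        ((continuous_Pd b ν hb).comp (continuous_id.add continuous_const))).aestronglyMeasurable)
    (by
      filter_upwards with u w _
      rw [Real.norm_eq_abs, abs_mul, abs_of_pos (phiPDF_pos _), hKdef]
      exact mul_le_mul_of_nonneg_left (Pd_bound b ν hb _) (phiPDF_pos _).le)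
    (by
      have := integ_shape' ha 0 K (g := fun _ => K) continuous_const
        (fun t => le_of_eq (abs_of_nonneg hK))
      simpa using this)
    (by
      filter_upwards with u w _
      have h1 : HasDerivAt (fun w : ℝ => Pfn b ν (u + w)) (Pd b ν (u + w)) w := by
        have := (hasDerivAt_Pfn b ν hb (u + w)).comp w ((hasDerivAt_id w).const_add u)
        rw [mul_one] at this; exact this
      exact h1.const_mul _)
  exact hres.2

lemma dG0_hasDeriv (hρ : ρ ∈ Set.Ioo (0:ℝ) 1) (ν : Fin k → ℝ) (v : ℝ) :
    HasDerivAt (fun v => Gint ρ v ν)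
      ((1/Real.sqrt ρ) * ∫ t : ℝ, phiPDF ((t - v)/Real.sqrt ρ) * Pd (Real.sqrt (1-ρ)) ν t) v := by
  have ha : 0 < Real.sqrt ρ := Real.sqrt_pos.2 hρ.1
  have hb : 0 < Real.sqrt (1-ρ) := Real.sqrt_pos.2 (by linarith [hρ.2])
  have hK : (0:ℝ) ≤ k * ((1/Real.sqrt (1-ρ)) * (Real.sqrt (2*Real.pi))⁻¹) := by positivity
  have key : ∀ w : ℝ, Gint ρ w ν =
      (1/Real.sqrt ρ) * ∫ u : ℝ, phiPDF (u/Real.sqrt ρ) * Pfn (Real.sqrt (1-ρ)) ν (u + w) := by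
    intro w
    rw [Gint]
    congr 1
    exact (shift_int (Real.sqrt ρ) w (Pfn (Real.sqrt (1-ρ)) ν)).symm
  have hD := hDlem (Real.sqrt ρ) (Real.sqrt (1-ρ)) ha hb ν v _ rfl hK
  have h2 : HasDerivAt
      (fun w => (1/Real.sqrt ρ) * ∫ u : ℝ, phiPDF (u/Real.sqrt ρ) * Pfn (Real.sqrt (1-ρ)) ν (u + w))
      ((1/Real.sqrt ρ) * ∫ t : ℝ, phiPDF ((t - v)/Real.sqrt ρ) * Pd (Real.sqrt (1-ρ)) ν t) v := by
    rw [← shift_int (Real.sqrt ρ) v (Pd (Real.sqrt (1-ρ)) ν)]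
    exact hD.const_mul _
  exact h2.congr_of_eventuallyEq (by filter_upwards with w using key w)

lemma dG0_eq (hρ : ρ ∈ Set.Ioo (0:ℝ) 1) (ν : Fin k → ℝ) (v : ℝ) :
    dG0 ρ ν v =
      (1/Real.sqrt ρ) * ∫ t : ℝ, phiPDF ((t - v)/Real.sqrt ρ) * Pd (Real.sqrt (1-ρ)) ν t :=
  (dG0_hasDeriv hρ ν v).deriv

lemma hDlem2 {k : ℕ} (a b : ℝ) (ha : 0 < a) (hb : 0 < b) (ν : Fin k → ℝ) (i : Fin k)
    (v0 : ℝ) :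
    HasDerivAt
      (fun v => ∫ t : ℝ, phiPDF ((t - v0)/a) * (Phi ((t - v)/b) * Qfn b ν i t))
      (∫ t : ℝ, phiPDF ((t - v0)/a) *
        (-(1/b) * phiPDF ((t - ν i)/b) * Qfn b ν i t)) (ν i) := by
  have hsq : (0:ℝ) < (Real.sqrt (2*Real.pi))⁻¹ := inv_pos.2 (Real.sqrt_pos.2 Real.two_pi_pos)
  have hcQ : Continuous (Qfn b ν i) := continuous_Qfn b ν i
  have hres := hasDerivAt_integral_of_dominated_loc_of_deriv_le
    (F := fun v t => phiPDF ((t - v0)/a) * (Phi ((t - v)/b) * Qfn b ν i t))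
    (F' := fun v t => phiPDF ((t - v0)/a) * (-(1/b) * phiPDF ((t - v)/b) * Qfn b ν i t))
    (x₀ := ν i) (s := Metric.ball (ν i) 1) (μ := (volume : Measure ℝ))
    (bound := fun t => phiPDF ((t - v0)/a) * ((1/b) * (Real.sqrt (2*Real.pi))⁻¹))
    (Metric.ball_mem_nhds _ one_pos)
    (by
      filter_upwards with v
      exact ((continuous_phiPDF.comp ((continuous_id.sub continuous_const).div_const a)).mul
        ((continuous_Phi.comp ((continuous_id.sub continuous_const).div_const b)).mul
          hcQ)).aestronglyMeasurable)
    (by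
      exact integ_shape' ha v0 1 (g := fun t => Phi ((t - ν i)/b) * Qfn b ν i t)
        ((continuous_Phi.comp ((continuous_id.sub continuous_const).div_const b)).mul hcQ)
        (fun t => by
          rw [abs_of_pos (mul_pos (Phi_pos _) (Qfn_pos b ν i t))]
          calc Phi ((t - ν i)/b) * Qfn b ν i t ≤ 1 * 1 :=
            mul_le_mul (Phi_le_one _) (Qfn_le_one b ν i t) (Qfn_pos b ν i t).le zero_le_one
          _ = 1 := one_mul 1))
    (by
      exact ((continuous_phiPDF.comp ((continuous_id.sub continuous_const).div_const a)).mul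
        (((continuous_const.mul (continuous_phiPDF.comp
          ((continuous_id.sub continuous_const).div_const b)))).mul
          hcQ)).aestronglyMeasurable)
    (by
      filter_upwards with t v _
      rw [Real.norm_eq_abs, abs_mul, abs_of_pos (phiPDF_pos _)]
      refine mul_le_mul_of_nonneg_left ?_ (phiPDF_pos _).le
      rw [abs_mul, abs_mul, abs_neg, abs_of_nonneg (by positivity : (0:ℝ) ≤ 1/b),
        abs_of_pos (phiPDF_pos _), abs_of_pos (Qfn_pos b ν i t)]
      calc 1/b * phiPDF ((t - v)/b) * Qfn b ν i t
          ≤ 1/b * (Real.sqrt (2*Real.pi))⁻¹ * 1 := by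
            apply mul_le_mul (mul_le_mul_of_nonneg_left (phiPDF_le _) (by positivity))
              (Qfn_le_one b ν i t) (Qfn_pos b ν i t).le (by positivity)
        _ = (1/b) * (Real.sqrt (2*Real.pi))⁻¹ := mul_one _)
    (by
      have h0 : (0:ℝ) ≤ (1/b) * (Real.sqrt (2*Real.pi))⁻¹ := by positivity
      have := integ_shape' ha v0 ((1/b) * (Real.sqrt (2*Real.pi))⁻¹)
        (g := fun _ => (1/b) * (Real.sqrt (2*Real.pi))⁻¹) continuous_const
        (fun t => le_of_eq (abs_of_nonneg h0))
      simpa using this)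
    (by
      filter_upwards with t v _
      have h1 : HasDerivAt (fun v : ℝ => Phi ((t - v)/b)) (-(1/b) * phiPDF ((t - v)/b)) v := by
        have hin : HasDerivAt (fun v : ℝ => (t - v)/b) (-1/b) v := by
          simpa using ((hasDerivAt_id v).const_sub t).div_const b
        have := (hasDerivAt_Phi ((t - v)/b)).comp v hin
        rw [show -(1/b) * phiPDF ((t - v)/b) = phiPDF ((t - v)/b) * (-1/b) by ring]; exact this
      have h2 := ((h1.mul_const (Qfn b ν i t)).const_mul (phiPDF ((t - v0)/a)))
      convert h2 using 1
      try ring)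
  exact hres.2

lemma dGi_eq (hρ : ρ ∈ Set.Ioo (0:ℝ) 1) (ν : Fin k → ℝ) (i : Fin k) (v0 : ℝ) :
    dGi ρ i ν v0 = -(1/(Real.sqrt ρ * Real.sqrt (1-ρ))) *
      ∫ t : ℝ, phiPDF ((t - v0)/Real.sqrt ρ) *
        (phiPDF ((t - ν i)/Real.sqrt (1-ρ)) * Qfn (Real.sqrt (1-ρ)) ν i t) := by
  have ha : 0 < Real.sqrt ρ := Real.sqrt_pos.2 hρ.1
  have hb : 0 < Real.sqrt (1-ρ) := Real.sqrt_pos.2 (by linarith [hρ.2])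
  have key : ∀ v : ℝ, Gint ρ v0 (Function.update ν i v) =
      (1/Real.sqrt ρ) * ∫ t : ℝ, phiPDF ((t - v0)/Real.sqrt ρ) *
        (Phi ((t - v)/Real.sqrt (1-ρ)) * Qfn (Real.sqrt (1-ρ)) ν i t) := by
    intro v
    rw [Gint]
    congr 1
    refine integral_congr_ae (Eventually.of_forall fun t => ?_)
    show phiPDF ((t - v0)/Real.sqrt ρ) *
        (∏ j, Phi ((t - Function.update ν i v j)/Real.sqrt (1-ρ))) = _
    rw [prod_update (Real.sqrt (1-ρ)) ν i v t]
    rfl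
  have hD := (hDlem2 (Real.sqrt ρ) (Real.sqrt (1-ρ)) ha hb ν i v0).const_mul (1/Real.sqrt ρ)
  have hD2 := hD.congr_of_eventuallyEq (by filter_upwards with v using key v)
  rw [dGi, hD2.deriv]
  have hcong : (fun t : ℝ => phiPDF ((t - v0)/Real.sqrt ρ) *
      (-(1/Real.sqrt (1-ρ)) * phiPDF ((t - ν i)/Real.sqrt (1-ρ)) * Qfn (Real.sqrt (1-ρ)) ν i t)) =
      fun t : ℝ => (-(1/Real.sqrt (1-ρ))) * (phiPDF ((t - v0)/Real.sqrt ρ) *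
        (phiPDF ((t - ν i)/Real.sqrt (1-ρ)) * Qfn (Real.sqrt (1-ρ)) ν i t)) := by
    funext t; ring
  rw [hcong, integral_const_mul]
  field_simp

/-- linear combination identity for the first-moment integrals -/
lemma lin_comb {a : ℝ} (ha : 0 < a) (v0 : ℝ) {g : ℝ → ℝ} {K : ℝ} (hg : Continuous g)
    (hgK : ∀ t, |g t| ≤ K) :
    ∫ t : ℝ, (t - v0)/a^2 * phiPDF ((t - v0)/a) * g t =
      (1/a^2) * ((∫ t : ℝ, t * (phiPDF ((t - v0)/a) * g t)) -
        v0 * ∫ t : ℝ, phiPDF ((t - v0)/a) * g t) := by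
  have h1 : (fun t : ℝ => (t - v0)/a^2 * phiPDF ((t - v0)/a) * g t) =
      fun t : ℝ => (1/a^2) * (t * (phiPDF ((t - v0)/a) * g t)) -
        (v0/a^2) * (phiPDF ((t - v0)/a) * g t) := by
    funext t; ring
  rw [h1, integral_sub ((integ_shape'' ha v0 K hg hgK).const_mul _)
    ((integ_shape' ha v0 K hg hgK).const_mul _), integral_const_mul, integral_const_mul]
  ring

/-- the key identity `H_i(t) · u(t) = w(t)` -/
lemma Hu_id (hρ : ρ ∈ Set.Ioo (0:ℝ) 1) (ν : Fin k → ℝ) (i : Fin k) (ν0 t : ℝ) :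
    Hfun ρ i ν t * (phiPDF ((t - ν0)/Real.sqrt ρ) *
        (phiPDF ((t - ν i)/Real.sqrt (1-ρ)) * Qfn (Real.sqrt (1-ρ)) ν i t)) =
      phiPDF ((t - ν0)/Real.sqrt ρ) * Pd (Real.sqrt (1-ρ)) ν t := by
  have hb : 0 < Real.sqrt (1-ρ) := Real.sqrt_pos.2 (by linarith [hρ.2])
  have hPfn : (fun s => ∏ j, Phi ((s - ν j)/Real.sqrt (1-ρ))) = Pfn (Real.sqrt (1-ρ)) ν := rfl
  have hP : (∏ j, Phi ((t - ν j)/Real.sqrt (1-ρ))) =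
      Phi ((t - ν i)/Real.sqrt (1-ρ)) * Qfn (Real.sqrt (1-ρ)) ν i t :=
    Pfn_eq_mul (Real.sqrt (1-ρ)) ν i t
  rw [Hfun, hPfn, (hasDerivAt_Pfn (Real.sqrt (1-ρ)) ν hb t).deriv, hP]
  have h1 : phiPDF ((t - ν i)/Real.sqrt (1-ρ)) ≠ 0 := (phiPDF_pos _).ne'
  have h2 : Phi ((t - ν i)/Real.sqrt (1-ρ)) ≠ 0 := (Phi_pos _).ne'
  have h3 : Qfn (Real.sqrt (1-ρ)) ν i t ≠ 0 := (Qfn_pos _ ν i t).ne'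
  field_simp

end Main

set_option maxHeartbeats 2000000 in
/-- Double-integral representation of
`∂²G/∂ν₀∂ν_i · ∂G/∂ν₀ - ∂²G/∂ν₀² · ∂G/∂ν_i`. -/
theorem stmt16 (k : ℕ) (hk : 1 ≤ k) (ρ : ℝ) (hρ : ρ ∈ Set.Ioo (0:ℝ) 1)
    (ν0 : ℝ) (ν : Fin k → ℝ) (i : Fin k) :
    Delta ρ i ν ν0 =
      (1 / (2 * ρ^2 * Real.sqrt (1-ρ))) *
        ∫ s : ℝ, ∫ t : ℝ,
          phiPDF ((s - ν0) / Real.sqrt ρ) * phiPDF ((t - ν0) / Real.sqrt ρ) *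
          phiPDF ((s - ν i) / Real.sqrt (1-ρ)) * phiPDF ((t - ν i) / Real.sqrt (1-ρ)) *
          (∏ j ∈ Finset.univ.erase i, Phi ((s - ν j) / Real.sqrt (1-ρ))) *
          (∏ j ∈ Finset.univ.erase i, Phi ((t - ν j) / Real.sqrt (1-ρ))) *
          ((s - t) * (Hfun ρ i ν s - Hfun ρ i ν t)) := by
  have ha : 0 < Real.sqrt ρ := Real.sqrt_pos.2 hρ.1
  have hb : 0 < Real.sqrt (1-ρ) := Real.sqrt_pos.2 (by linarith [hρ.2])
  have haa : Real.sqrt ρ ^ 2 = ρ := Real.sq_sqrt hρ.1.le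
  have hsq : (0:ℝ) < (Real.sqrt (2*Real.pi))⁻¹ := inv_pos.2 (Real.sqrt_pos.2 Real.two_pi_pos)
  -- the two bounded continuous factors
  have hgUc : Continuous (fun t : ℝ =>
      phiPDF ((t - ν i)/Real.sqrt (1-ρ)) * Qfn (Real.sqrt (1-ρ)) ν i t) :=
    (continuous_phiPDF.comp ((continuous_id.sub continuous_const).div_const _)).mul
      (continuous_Qfn _ ν i)
  have hgUb : ∀ t : ℝ, |phiPDF ((t - ν i)/Real.sqrt (1-ρ)) * Qfn (Real.sqrt (1-ρ)) ν i t| ≤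
      (Real.sqrt (2*Real.pi))⁻¹ := by
    intro t
    rw [abs_of_pos (mul_pos (phiPDF_pos _) (Qfn_pos _ ν i t))]
    calc phiPDF ((t - ν i)/Real.sqrt (1-ρ)) * Qfn (Real.sqrt (1-ρ)) ν i t
        ≤ (Real.sqrt (2*Real.pi))⁻¹ * 1 :=
          mul_le_mul (phiPDF_le _) (Qfn_le_one _ ν i t) (Qfn_pos _ ν i t).le hsq.le
      _ = (Real.sqrt (2*Real.pi))⁻¹ := mul_one _
  have hgWc : Continuous (Pd (Real.sqrt (1-ρ)) ν) := continuous_Pd _ ν hb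
  have hgWb : ∀ t : ℝ, |Pd (Real.sqrt (1-ρ)) ν t| ≤
      k * ((1/Real.sqrt (1-ρ)) * (Real.sqrt (2*Real.pi))⁻¹) := Pd_bound _ ν hb
  -- integrability of the four basic integrands
  have intU : Integrable (fun t : ℝ => phiPDF ((t - ν0)/Real.sqrt ρ) *
      (phiPDF ((t - ν i)/Real.sqrt (1-ρ)) * Qfn (Real.sqrt (1-ρ)) ν i t)) :=
    integ_shape' ha ν0 _ hgUc hgUb
  have intTU : Integrable (fun t : ℝ => t * (phiPDF ((t - ν0)/Real.sqrt ρ) *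
      (phiPDF ((t - ν i)/Real.sqrt (1-ρ)) * Qfn (Real.sqrt (1-ρ)) ν i t))) :=
    integ_shape'' ha ν0 _ hgUc hgUb
  have intW : Integrable (fun t : ℝ => phiPDF ((t - ν0)/Real.sqrt ρ) *
      Pd (Real.sqrt (1-ρ)) ν t) := integ_shape' ha ν0 _ hgWc hgWb
  have intTW : Integrable (fun t : ℝ => t * (phiPDF ((t - ν0)/Real.sqrt ρ) *
      Pd (Real.sqrt (1-ρ)) ν t)) := integ_shape'' ha ν0 _ hgWc hgWb
  -- inner integral computation
  have hinner : ∀ s : ℝ, (∫ t : ℝ,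
      phiPDF ((s - ν0) / Real.sqrt ρ) * phiPDF ((t - ν0) / Real.sqrt ρ) *
      phiPDF ((s - ν i) / Real.sqrt (1-ρ)) * phiPDF ((t - ν i) / Real.sqrt (1-ρ)) *
      (∏ j ∈ Finset.univ.erase i, Phi ((s - ν j) / Real.sqrt (1-ρ))) *
      (∏ j ∈ Finset.univ.erase i, Phi ((t - ν j) / Real.sqrt (1-ρ))) *
      ((s - t) * (Hfun ρ i ν s - Hfun ρ i ν t))) =
      ((s * (phiPDF ((s - ν0)/Real.sqrt ρ) * Pd (Real.sqrt (1-ρ)) ν s)) *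
          (∫ t : ℝ, phiPDF ((t - ν0)/Real.sqrt ρ) *
            (phiPDF ((t - ν i)/Real.sqrt (1-ρ)) * Qfn (Real.sqrt (1-ρ)) ν i t)) -
        (phiPDF ((s - ν0)/Real.sqrt ρ) * Pd (Real.sqrt (1-ρ)) ν s) *
          (∫ t : ℝ, t * (phiPDF ((t - ν0)/Real.sqrt ρ) *
            (phiPDF ((t - ν i)/Real.sqrt (1-ρ)) * Qfn (Real.sqrt (1-ρ)) ν i t)))) -
      ((s * (phiPDF ((s - ν0)/Real.sqrt ρ) *
          (phiPDF ((s - ν i)/Real.sqrt (1-ρ)) * Qfn (Real.sqrt (1-ρ)) ν i s))) *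
          (∫ t : ℝ, phiPDF ((t - ν0)/Real.sqrt ρ) * Pd (Real.sqrt (1-ρ)) ν t) -
        (phiPDF ((s - ν0)/Real.sqrt ρ) *
          (phiPDF ((s - ν i)/Real.sqrt (1-ρ)) * Qfn (Real.sqrt (1-ρ)) ν i s)) *
          (∫ t : ℝ, t * (phiPDF ((t - ν0)/Real.sqrt ρ) * Pd (Real.sqrt (1-ρ)) ν t))) := by
    intro s
    have hpt : ∀ t : ℝ,
        phiPDF ((s - ν0) / Real.sqrt ρ) * phiPDF ((t - ν0) / Real.sqrt ρ) *
        phiPDF ((s - ν i) / Real.sqrt (1-ρ)) * phiPDF ((t - ν i) / Real.sqrt (1-ρ)) *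
        (∏ j ∈ Finset.univ.erase i, Phi ((s - ν j) / Real.sqrt (1-ρ))) *
        (∏ j ∈ Finset.univ.erase i, Phi ((t - ν j) / Real.sqrt (1-ρ))) *
        ((s - t) * (Hfun ρ i ν s - Hfun ρ i ν t)) =
        ((s * (phiPDF ((s - ν0)/Real.sqrt ρ) * Pd (Real.sqrt (1-ρ)) ν s)) *
            (phiPDF ((t - ν0)/Real.sqrt ρ) *
              (phiPDF ((t - ν i)/Real.sqrt (1-ρ)) * Qfn (Real.sqrt (1-ρ)) ν i t)) -
          (phiPDF ((s - ν0)/Real.sqrt ρ) * Pd (Real.sqrt (1-ρ)) ν s) *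
            (t * (phiPDF ((t - ν0)/Real.sqrt ρ) *
              (phiPDF ((t - ν i)/Real.sqrt (1-ρ)) * Qfn (Real.sqrt (1-ρ)) ν i t)))) -
        ((s * (phiPDF ((s - ν0)/Real.sqrt ρ) *
            (phiPDF ((s - ν i)/Real.sqrt (1-ρ)) * Qfn (Real.sqrt (1-ρ)) ν i s))) *
            (phiPDF ((t - ν0)/Real.sqrt ρ) * Pd (Real.sqrt (1-ρ)) ν t) -
          (phiPDF ((s - ν0)/Real.sqrt ρ) *
            (phiPDF ((s - ν i)/Real.sqrt (1-ρ)) * Qfn (Real.sqrt (1-ρ)) ν i s)) *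
            (t * (phiPDF ((t - ν0)/Real.sqrt ρ) * Pd (Real.sqrt (1-ρ)) ν t))) := by
      intro t
      have h1 := Hu_id hρ ν i ν0 s
      have h2 := Hu_id hρ ν i ν0 t
      calc phiPDF ((s - ν0) / Real.sqrt ρ) * phiPDF ((t - ν0) / Real.sqrt ρ) *
          phiPDF ((s - ν i) / Real.sqrt (1-ρ)) * phiPDF ((t - ν i) / Real.sqrt (1-ρ)) *
          (∏ j ∈ Finset.univ.erase i, Phi ((s - ν j) / Real.sqrt (1-ρ))) *
          (∏ j ∈ Finset.univ.erase i, Phi ((t - ν j) / Real.sqrt (1-ρ))) *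
          ((s - t) * (Hfun ρ i ν s - Hfun ρ i ν t)) =
          (s - t) * ((Hfun ρ i ν s * (phiPDF ((s - ν0)/Real.sqrt ρ) *
              (phiPDF ((s - ν i)/Real.sqrt (1-ρ)) * Qfn (Real.sqrt (1-ρ)) ν i s))) *
            (phiPDF ((t - ν0)/Real.sqrt ρ) *
              (phiPDF ((t - ν i)/Real.sqrt (1-ρ)) * Qfn (Real.sqrt (1-ρ)) ν i t)) -
            (phiPDF ((s - ν0)/Real.sqrt ρ) *
              (phiPDF ((s - ν i)/Real.sqrt (1-ρ)) * Qfn (Real.sqrt (1-ρ)) ν i s)) *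
            (Hfun ρ i ν t * (phiPDF ((t - ν0)/Real.sqrt ρ) *
              (phiPDF ((t - ν i)/Real.sqrt (1-ρ)) * Qfn (Real.sqrt (1-ρ)) ν i t)))) := by
            simp only [Qfn]; ring
        _ = _ := by rw [h1, h2]; ring
    rw [integral_congr_ae (Filter.Eventually.of_forall hpt)]
    have iA : Integrable (fun t : ℝ => (s * (phiPDF ((s - ν0)/Real.sqrt ρ) * Pd (Real.sqrt (1-ρ)) ν s)) *
        (phiPDF ((t - ν0)/Real.sqrt ρ) *
          (phiPDF ((t - ν i)/Real.sqrt (1-ρ)) * Qfn (Real.sqrt (1-ρ)) ν i t))) := intU.const_mul _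
    have iB : Integrable (fun t : ℝ => (phiPDF ((s - ν0)/Real.sqrt ρ) * Pd (Real.sqrt (1-ρ)) ν s) *
        (t * (phiPDF ((t - ν0)/Real.sqrt ρ) *
          (phiPDF ((t - ν i)/Real.sqrt (1-ρ)) * Qfn (Real.sqrt (1-ρ)) ν i t)))) := intTU.const_mul _
    have iC : Integrable (fun t : ℝ => (s * (phiPDF ((s - ν0)/Real.sqrt ρ) *
        (phiPDF ((s - ν i)/Real.sqrt (1-ρ)) * Qfn (Real.sqrt (1-ρ)) ν i s))) *
        (phiPDF ((t - ν0)/Real.sqrt ρ) * Pd (Real.sqrt (1-ρ)) ν t)) := intW.const_mul _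
    have iD : Integrable (fun t : ℝ => (phiPDF ((s - ν0)/Real.sqrt ρ) *
        (phiPDF ((s - ν i)/Real.sqrt (1-ρ)) * Qfn (Real.sqrt (1-ρ)) ν i s)) *
        (t * (phiPDF ((t - ν0)/Real.sqrt ρ) * Pd (Real.sqrt (1-ρ)) ν t))) := intTW.const_mul _
    have iAB : Integrable (fun t : ℝ => (s * (phiPDF ((s - ν0)/Real.sqrt ρ) * Pd (Real.sqrt (1-ρ)) ν s)) *
        (phiPDF ((t - ν0)/Real.sqrt ρ) *
          (phiPDF ((t - ν i)/Real.sqrt (1-ρ)) * Qfn (Real.sqrt (1-ρ)) ν i t)) -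
        (phiPDF ((s - ν0)/Real.sqrt ρ) * Pd (Real.sqrt (1-ρ)) ν s) *
        (t * (phiPDF ((t - ν0)/Real.sqrt ρ) *
          (phiPDF ((t - ν i)/Real.sqrt (1-ρ)) * Qfn (Real.sqrt (1-ρ)) ν i t)))) := iA.sub iB
    have iCD : Integrable (fun t : ℝ => (s * (phiPDF ((s - ν0)/Real.sqrt ρ) *
        (phiPDF ((s - ν i)/Real.sqrt (1-ρ)) * Qfn (Real.sqrt (1-ρ)) ν i s))) *
        (phiPDF ((t - ν0)/Real.sqrt ρ) * Pd (Real.sqrt (1-ρ)) ν t) -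
        (phiPDF ((s - ν0)/Real.sqrt ρ) *
        (phiPDF ((s - ν i)/Real.sqrt (1-ρ)) * Qfn (Real.sqrt (1-ρ)) ν i s)) *
        (t * (phiPDF ((t - ν0)/Real.sqrt ρ) * Pd (Real.sqrt (1-ρ)) ν t))) := iC.sub iD
    rw [integral_sub iAB iCD, integral_sub iA iB, integral_sub iC iD,
      integral_const_mul, integral_const_mul, integral_const_mul, integral_const_mul]
  -- outer integral
  have houter : (∫ s : ℝ, ∫ t : ℝ,
      phiPDF ((s - ν0) / Real.sqrt ρ) * phiPDF ((t - ν0) / Real.sqrt ρ) *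
      phiPDF ((s - ν i) / Real.sqrt (1-ρ)) * phiPDF ((t - ν i) / Real.sqrt (1-ρ)) *
      (∏ j ∈ Finset.univ.erase i, Phi ((s - ν j) / Real.sqrt (1-ρ))) *
      (∏ j ∈ Finset.univ.erase i, Phi ((t - ν j) / Real.sqrt (1-ρ))) *
      ((s - t) * (Hfun ρ i ν s - Hfun ρ i ν t))) =
      2 * ((∫ t : ℝ, t * (phiPDF ((t - ν0)/Real.sqrt ρ) * Pd (Real.sqrt (1-ρ)) ν t)) *
          (∫ t : ℝ, phiPDF ((t - ν0)/Real.sqrt ρ) *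
            (phiPDF ((t - ν i)/Real.sqrt (1-ρ)) * Qfn (Real.sqrt (1-ρ)) ν i t)) -
        (∫ t : ℝ, t * (phiPDF ((t - ν0)/Real.sqrt ρ) *
            (phiPDF ((t - ν i)/Real.sqrt (1-ρ)) * Qfn (Real.sqrt (1-ρ)) ν i t))) *
          (∫ t : ℝ, phiPDF ((t - ν0)/Real.sqrt ρ) * Pd (Real.sqrt (1-ρ)) ν t)) := by
    rw [integral_congr_ae (Filter.Eventually.of_forall hinner)]
    have jA : Integrable (fun s : ℝ => (s * (phiPDF ((s - ν0)/Real.sqrt ρ) * Pd (Real.sqrt (1-ρ)) ν s)) *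
        (∫ t : ℝ, phiPDF ((t - ν0)/Real.sqrt ρ) *
          (phiPDF ((t - ν i)/Real.sqrt (1-ρ)) * Qfn (Real.sqrt (1-ρ)) ν i t))) := intTW.mul_const _
    have jB : Integrable (fun s : ℝ => (phiPDF ((s - ν0)/Real.sqrt ρ) * Pd (Real.sqrt (1-ρ)) ν s) *
        (∫ t : ℝ, t * (phiPDF ((t - ν0)/Real.sqrt ρ) *
          (phiPDF ((t - ν i)/Real.sqrt (1-ρ)) * Qfn (Real.sqrt (1-ρ)) ν i t)))) := intW.mul_const _
    have jC : Integrable (fun s : ℝ => (s * (phiPDF ((s - ν0)/Real.sqrt ρ) *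
        (phiPDF ((s - ν i)/Real.sqrt (1-ρ)) * Qfn (Real.sqrt (1-ρ)) ν i s))) *
        (∫ t : ℝ, phiPDF ((t - ν0)/Real.sqrt ρ) * Pd (Real.sqrt (1-ρ)) ν t)) := intTU.mul_const _
    have jD : Integrable (fun s : ℝ => (phiPDF ((s - ν0)/Real.sqrt ρ) *
        (phiPDF ((s - ν i)/Real.sqrt (1-ρ)) * Qfn (Real.sqrt (1-ρ)) ν i s)) *
        (∫ t : ℝ, t * (phiPDF ((t - ν0)/Real.sqrt ρ) * Pd (Real.sqrt (1-ρ)) ν t))) := intU.mul_const _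
    have jAB : Integrable (fun s : ℝ => (s * (phiPDF ((s - ν0)/Real.sqrt ρ) * Pd (Real.sqrt (1-ρ)) ν s)) *
        (∫ t : ℝ, phiPDF ((t - ν0)/Real.sqrt ρ) *
          (phiPDF ((t - ν i)/Real.sqrt (1-ρ)) * Qfn (Real.sqrt (1-ρ)) ν i t)) -
        (phiPDF ((s - ν0)/Real.sqrt ρ) * Pd (Real.sqrt (1-ρ)) ν s) *
        (∫ t : ℝ, t * (phiPDF ((t - ν0)/Real.sqrt ρ) *
          (phiPDF ((t - ν i)/Real.sqrt (1-ρ)) * Qfn (Real.sqrt (1-ρ)) ν i t)))) := jA.sub jB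
    have jCD : Integrable (fun s : ℝ => (s * (phiPDF ((s - ν0)/Real.sqrt ρ) *
        (phiPDF ((s - ν i)/Real.sqrt (1-ρ)) * Qfn (Real.sqrt (1-ρ)) ν i s))) *
        (∫ t : ℝ, phiPDF ((t - ν0)/Real.sqrt ρ) * Pd (Real.sqrt (1-ρ)) ν t) -
        (phiPDF ((s - ν0)/Real.sqrt ρ) *
        (phiPDF ((s - ν i)/Real.sqrt (1-ρ)) * Qfn (Real.sqrt (1-ρ)) ν i s)) *
        (∫ t : ℝ, t * (phiPDF ((t - ν0)/Real.sqrt ρ) * Pd (Real.sqrt (1-ρ)) ν t))) := jC.sub jD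
    rw [integral_sub jAB jCD, integral_sub jA jB, integral_sub jC jD,
      integral_mul_const, integral_mul_const, integral_mul_const, integral_mul_const]
    ring
  -- derivative formulas for the LHS
  have hder1 : deriv (fun v0 => dGi ρ i ν v0) ν0 =
      -(1/(Real.sqrt ρ * Real.sqrt (1-ρ))) *
        ((1/Real.sqrt ρ^2) * ((∫ t : ℝ, t * (phiPDF ((t - ν0)/Real.sqrt ρ) *
          (phiPDF ((t - ν i)/Real.sqrt (1-ρ)) * Qfn (Real.sqrt (1-ρ)) ν i t))) -
          ν0 * ∫ t : ℝ, phiPDF ((t - ν0)/Real.sqrt ρ) *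
            (phiPDF ((t - ν i)/Real.sqrt (1-ρ)) * Qfn (Real.sqrt (1-ρ)) ν i t))) := by
    have hfun1 : (fun v0 => dGi ρ i ν v0) = fun v0 =>
        -(1/(Real.sqrt ρ * Real.sqrt (1-ρ))) *
          ∫ t : ℝ, phiPDF ((t - v0)/Real.sqrt ρ) *
            (phiPDF ((t - ν i)/Real.sqrt (1-ρ)) * Qfn (Real.sqrt (1-ρ)) ν i t) :=
      funext (dGi_eq hρ ν i)
    rw [hfun1, ((keyderiv ha hgUc hgUb ν0).const_mul
      (-(1/(Real.sqrt ρ * Real.sqrt (1-ρ))))).deriv, lin_comb ha ν0 hgUc hgUb]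
  have hder2 : deriv (fun v0 => dG0 ρ ν v0) ν0 =
      (1/Real.sqrt ρ) * ((1/Real.sqrt ρ^2) *
        ((∫ t : ℝ, t * (phiPDF ((t - ν0)/Real.sqrt ρ) * Pd (Real.sqrt (1-ρ)) ν t)) -
          ν0 * ∫ t : ℝ, phiPDF ((t - ν0)/Real.sqrt ρ) * Pd (Real.sqrt (1-ρ)) ν t)) := by
    have hfun2 : (fun v0 => dG0 ρ ν v0) = fun v0 =>
        (1/Real.sqrt ρ) * ∫ t : ℝ, phiPDF ((t - v0)/Real.sqrt ρ) * Pd (Real.sqrt (1-ρ)) ν t :=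
      funext (dG0_eq hρ ν)
    rw [hfun2, ((keyderiv ha hgWc hgWb ν0).const_mul (1/Real.sqrt ρ)).deriv,
      lin_comb ha ν0 hgWc hgWb]
  -- put everything together
  rw [Delta, hder1, hder2, dG0_eq hρ ν ν0, dGi_eq hρ ν i ν0, houter]
  have hb0 : Real.sqrt (1-ρ) ≠ 0 := hb.ne'
  have ha0 : Real.sqrt ρ ≠ 0 := ha.ne'
  generalize (∫ t : ℝ, phiPDF ((t - ν0)/Real.sqrt ρ) *
      (phiPDF ((t - ν i)/Real.sqrt (1-ρ)) * Qfn (Real.sqrt (1-ρ)) ν i t)) = Iu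
  generalize (∫ t : ℝ, t * (phiPDF ((t - ν0)/Real.sqrt ρ) *
      (phiPDF ((t - ν i)/Real.sqrt (1-ρ)) * Qfn (Real.sqrt (1-ρ)) ν i t))) = Itu
  generalize (∫ t : ℝ, phiPDF ((t - ν0)/Real.sqrt ρ) * Pd (Real.sqrt (1-ρ)) ν t) = Iw
  generalize (∫ t : ℝ, t * (phiPDF ((t - ν0)/Real.sqrt ρ) * Pd (Real.sqrt (1-ρ)) ν t)) = Itw
  rw [← haa] at hb0 ⊢
  field_simp
  simp only [Real.sqrt_sq ha.le]
  ring
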